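/- (Andréiev identity) For square-integrable real functions φ₁,…,φ_N with respect to a measure μ, det((∫φ_iφ_j dμ)_{1≤i,j≤N}) = (1/N!) ∫⋯∫ (det((φ_i(v_j))_{1≤i,j≤N}))² dμ(v₁)⋯dμ(v_N). -/

import Mathlib

open Matrix MeasureTheory

lemma andreiev_aux {N : ℕ} (A : Matrix (Fin N) (Fin N) ℝ) :
    ∑ σ : Equiv.Perm (Fin N), ∑ τ : Equiv.Perm (Fin N),
      ((Equiv.Perm.sign σ : ℤ) : ℝ) * ((Equiv.Perm.sign τ : ℤ) : ℝ) * ∏ i, A (σ i) (τ i)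
    = (N.factorial : ℝ) * A.det := by
  have h : ∀ σ : Equiv.Perm (Fin N),
      ∑ τ : Equiv.Perm (Fin N),
        ((Equiv.Perm.sign σ : ℤ) : ℝ) * ((Equiv.Perm.sign τ : ℤ) : ℝ) * ∏ i, A (σ i) (τ i)
      = A.det := by
    intro σ
    rw [← Equiv.sum_comp (Equiv.mulRight σ)]
    have : ∀ ρ : Equiv.Perm (Fin N),
        ((Equiv.Perm.sign σ : ℤ) : ℝ) * ((Equiv.Perm.sign (ρ * σ) : ℤ) : ℝ)
          * ∏ i, A (σ i) ((ρ * σ) i)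
        = ((Equiv.Perm.sign ρ : ℤ) : ℝ) * ∏ j, A j (ρ j) := by
      intro ρ
      have hs : ((Equiv.Perm.sign σ : ℤ) : ℝ) * ((Equiv.Perm.sign σ : ℤ) : ℝ) = 1 := by
        rcases Int.units_eq_one_or (Equiv.Perm.sign σ) with h | h <;> rw [h] <;> norm_num
      have hp : ∏ i, A (σ i) ((ρ * σ) i) = ∏ j, A j (ρ j) := by
        simpa using Equiv.prod_comp σ (fun j => A j (ρ j))
      rw [hp, Equiv.Perm.sign_mul]
      push_cast
      rw [show ∀ a b c : ℝ, a * (b * a) * c = (a * a) * (b * c) by intros; ring, hs, one_mul]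
    simp_rw [Equiv.coe_mulRight, this]
    rw [← Matrix.det_transpose A, Matrix.det_apply']
    simp [Matrix.transpose_apply]
  simp_rw [h, Finset.sum_const, Finset.card_univ, Fintype.card_perm, Fintype.card_fin,
    nsmul_eq_mul]

theorem stmt11 {X : Type*} [MeasurableSpace X] (μ : Measure X) [SigmaFinite μ]
    (N : ℕ) (hN : 1 ≤ N) (φ : Fin N → X → ℝ)
    (hint : ∀ i j : Fin N, Integrable (fun v => φ i v * φ j v) μ)
    (hmeas : ∀ i, AEStronglyMeasurable (φ i) μ) :
    (Matrix.of fun i j : Fin N => ∫ v, φ i v * φ j v ∂μ).det =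
      (1 / (Nat.factorial N) : ℝ) *
        ∫ v : Fin N → X,
          ((Matrix.of fun i j : Fin N => φ i (v j)).det) ^ 2
          ∂(Measure.pi fun _ : Fin N => μ) := by
  letI : MeasureSpace X := ⟨μ⟩
  set A : Matrix (Fin N) (Fin N) ℝ := Matrix.of fun i j : Fin N => ∫ v, φ i v * φ j v ∂μ with hA
  have h1 : ∀ v : Fin N → X, ((Matrix.of fun i j : Fin N => φ i (v j)).det) ^ 2 =
      ∑ σ : Equiv.Perm (Fin N), ∑ τ : Equiv.Perm (Fin N),
        ((Equiv.Perm.sign σ : ℤ) : ℝ) * ((Equiv.Perm.sign τ : ℤ) : ℝ)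
          * ∏ i, (φ (σ i) (v i) * φ (τ i) (v i)) := by
    intro v
    rw [sq, Matrix.det_apply', Finset.sum_mul_sum]
    refine Finset.sum_congr rfl fun σ _ => Finset.sum_congr rfl fun τ _ => ?_
    rw [Finset.prod_mul_distrib]
    simp only [Matrix.of_apply]
    ring
  have hintegr : ∀ σ τ : Equiv.Perm (Fin N),
      Integrable (fun v : Fin N → X =>
        ((Equiv.Perm.sign σ : ℤ) : ℝ) * ((Equiv.Perm.sign τ : ℤ) : ℝ)
          * ∏ i, (φ (σ i) (v i) * φ (τ i) (v i))) (Measure.pi fun _ : Fin N => μ) := by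
    intro σ τ
    exact (Integrable.fintype_prod (f := fun i (x : X) => φ (σ i) x * φ (τ i) x)
      (fun i => hint (σ i) (τ i))).const_mul _
  have h2 : ∫ v : Fin N → X, ((Matrix.of fun i j : Fin N => φ i (v j)).det) ^ 2
        ∂(Measure.pi fun _ : Fin N => μ)
      = ∑ σ : Equiv.Perm (Fin N), ∑ τ : Equiv.Perm (Fin N),
        ((Equiv.Perm.sign σ : ℤ) : ℝ) * ((Equiv.Perm.sign τ : ℤ) : ℝ) * ∏ i, A (σ i) (τ i) := by
    simp_rw [h1]
    rw [integral_finset_sum _ (fun σ _ => integrable_finset_sum _ (fun τ _ => hintegr σ τ))]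
    refine Finset.sum_congr rfl fun σ _ => ?_
    rw [integral_finset_sum _ (fun τ _ => hintegr σ τ)]
    refine Finset.sum_congr rfl fun τ _ => ?_
    rw [integral_const_mul]
    congr 1
    rw [integral_fintype_prod_eq_prod (fun i (x : X) => φ (σ i) x * φ (τ i) x)]
    rfl
  rw [h2, andreiev_aux]
  have : (N.factorial : ℝ) ≠ 0 := Nat.cast_ne_zero.mpr (Nat.factorial_ne_zero N)
  field_simp
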